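/- Let P = (p_1, …, p_n) be a finite sequence of pairwise distinct points in ℝ^d and let 1 ≤ i < j ≤ n. If Cell(p_i; P_{1:j}) is a proper subset of Cell(p_i; P_{1:j−1}) (the insertion of p_j prunes the Voronoi cell of p_i), then there exists c ∈ ℝ^d with dist(c, p_i) = dist(c, p_j) ≤ dist(c, p_k) for all 1 ≤ k ≤ j; in particular Cell(p_i; P_{1:j}) ∩ Cell(p_j; P_{1:j}) ≠ ∅, i.e., p_i and p_j are Voronoi-adjacent in P_{1:j}. -/

import Mathlib

open Set

noncomputable section

/-- Euclidean space `ℝ^d`. -/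
abbrev E (d : ℕ) := EuclideanSpace ℝ (Fin d)

/-- The Voronoi cell of `p` with respect to the site set `S`:
all points at least as close to `p` as to every site of `S`. -/
def cell {d : ℕ} (p : E d) (S : Set (E d)) : Set (E d) :=
  {x | ∀ s ∈ S, dist x p ≤ dist x s}

/-- The prefix set `P_{1:m}` consisting of the first `m` points of the
sequence `p` (0-based indices `< m`). -/
def pref {d n : ℕ} (p : Fin n → E d) (m : ℕ) : Set (E d) :=
  p '' {i : Fin n | (i : ℕ) < m}

/-- `p j` is a successor of `p i` (`p j ∈ L i`): `i < j` and the insertion of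
`p j` prunes the Voronoi cell of `p i`, i.e. `Cell(p_i; P_{1:j})` is a proper
subset of `Cell(p_i; P_{1:j-1})` (in 1-based notation). -/
def isSucc {d n : ℕ} (p : Fin n → E d) (i j : Fin n) : Prop :=
  i < j ∧ cell (p i) (pref p ((j : ℕ) + 1)) ⊂ cell (p i) (pref p (j : ℕ))

/-- `p i` is the nearest neighbor `Φ_{1:m}(q)` of `q` in the prefix `P_{1:m}`. -/
def isNearest {d n : ℕ} (p : Fin n → E d) (q : E d) (m : ℕ) (i : Fin n) : Prop :=
  (i : ℕ) < m ∧ ∀ j : Fin n, (j : ℕ) < m → dist q (p i) ≤ dist q (p j)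

lemma mem_pref_succ {d n : ℕ} {p : Fin n → E d} {j : Fin n} {s : E d}
    (hs : s ∈ pref p ((j : ℕ) + 1)) : s ∈ pref p (j : ℕ) ∨ s = p j := by
  obtain ⟨k, hk, rfl⟩ := hs
  rcases Nat.lt_succ_iff_lt_or_eq.mp hk with h | h
  · exact Or.inl ⟨k, h, rfl⟩
  · exact Or.inr (congrArg p (Fin.ext h))

lemma halfspace_convex {d : ℕ} (q s : E d) :
    Convex ℝ {x : E d | dist x q ≤ dist x s} := by
  have key : ∀ x : E d, dist x q ≤ dist x s ↔
      inner ℝ (s - q) x ≤ (‖s‖ ^ 2 - ‖q‖ ^ 2) / 2 := by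
    intro x
    rw [dist_eq_norm, dist_eq_norm,
      ← Real.sqrt_sq (norm_nonneg (x - q)), ← Real.sqrt_sq (norm_nonneg (x - s)),
      Real.sqrt_le_sqrt_iff (by positivity)]
    rw [norm_sub_sq_real, norm_sub_sq_real, inner_sub_left,
      real_inner_comm s x, real_inner_comm q x]
    constructor <;> intro h <;> nlinarith
  have : {x : E d | dist x q ≤ dist x s} =
      {x : E d | inner ℝ (s - q) x ≤ (‖s‖ ^ 2 - ‖q‖ ^ 2) / 2} := by
    ext x; exact key x
  rw [this]
  exact convex_halfSpace_le
    (innerSL ℝ (s - q) : E d →L[ℝ] ℝ).toLinearMap.isLinear _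

lemma cell_convex {d : ℕ} (q : E d) (S : Set (E d)) : Convex ℝ (cell q S) := by
  intro x hx y hy a b ha hb hab
  intro s hs
  exact halfspace_convex q s (hx s hs) (hy s hs) ha hb hab

/-- if the insertion of `p_j` prunes the Voronoi cell of `p_i`,
then there is a point `c` equidistant from `p_i` and `p_j` and at least as
close to them as to every `p_k` with `k ≤ j`; in particular `p_i` and `p_j`
are Voronoi-adjacent in `P_{1:j}`. -/
theorem stmt10
    {d n : ℕ} (hd : 1 ≤ d)
    (p : Fin n → E d) (hp : Function.Injective p)
    (i j : Fin n) (hij : i < j)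
    (hprune : cell (p i) (pref p ((j : ℕ) + 1)) ⊂ cell (p i) (pref p (j : ℕ))) :
    (∃ c : E d, dist c (p i) = dist c (p j) ∧
      ∀ k : Fin n, k ≤ j → dist c (p i) ≤ dist c (p k)) ∧
    (cell (p i) (pref p ((j : ℕ) + 1)) ∩
      cell (p j) (pref p ((j : ℕ) + 1))).Nonempty := by
  -- A point strictly pruned: in the old cell, not in the new one.
  obtain ⟨x, hxB, hxA⟩ := exists_of_ssubset hprune
  -- The offending site must be `p j` itself.
  have hxj : dist x (p j) < dist x (p i) := by
    simp only [cell, mem_setOf_eq, not_forall] at hxA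
    obtain ⟨s, hs, hlt⟩ := hxA
    push_neg at hlt
    rcases mem_pref_succ hs with hs' | rfl
    · exact absurd (hxB s hs') (not_le_of_gt hlt)
    · exact hlt
  set a := p i with ha
  have haB : a ∈ cell (p i) (pref p (j : ℕ)) := by
    intro s hs
    simp only [ha, dist_self]
    exact dist_nonneg
  have haj : dist a (p i) < dist a (p j) := by
    have : p i ≠ p j := fun h => (hij.ne (hp h)).elim
    simp [ha, dist_self, dist_pos, this]
  -- Intermediate value along the segment from `a` to `x`.
  set f : ℝ → ℝ := fun t =>
    dist (AffineMap.lineMap a x t) (p i) - dist (AffineMap.lineMap a x t) (p j)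
    with hf
  have hcont : Continuous f := by
    have h1 : Continuous fun t : ℝ => (AffineMap.lineMap a x t : E d) :=
      AffineMap.lineMap_continuous
    exact (h1.dist continuous_const).sub (h1.dist continuous_const)
  have hf0 : f 0 < 0 := by
    have h : f 0 = dist a (p i) - dist a (p j) := by simp [hf]
    rw [h]; linarith
  have hf1 : 0 < f 1 := by
    have h : f 1 = dist x (p i) - dist x (p j) := by
      simp only [hf, AffineMap.lineMap_apply_one]
    rw [h]; linarith
  have hIVT := intermediate_value_Icc (by norm_num : (0:ℝ) ≤ 1) hcont.continuousOn
  have h0mem : (0:ℝ) ∈ Icc (f 0) (f 1) := ⟨hf0.le, hf1.le⟩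
  obtain ⟨t, ht, hft⟩ := hIVT h0mem
  set c : E d := AffineMap.lineMap a x t with hc
  have hceq : dist c (p i) = dist c (p j) := by
    have := hft
    simp only [hf] at this
    linarith [this]
  -- c lies in the old cell by convexity.
  have hcseg : c ∈ segment ℝ a x := by
    rw [segment_eq_image_lineMap]
    exact ⟨t, ht, rfl⟩
  have hcB : c ∈ cell (p i) (pref p (j : ℕ)) :=
    (cell_convex (p i) (pref p (j : ℕ))).segment_subset haB hxB hcseg
  have hkey : ∀ k : Fin n, k ≤ j → dist c (p i) ≤ dist c (p k) := by
    intro k hk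
    rcases lt_or_eq_of_le hk with hk' | rfl
    · exact hcB (p k) ⟨k, hk', rfl⟩
    · exact hceq.le
  refine ⟨⟨c, hceq, hkey⟩, ⟨c, ?_, ?_⟩⟩
  · intro s hs
    rcases mem_pref_succ hs with hs' | rfl
    · exact hcB s hs'
    · exact hceq.le
  · intro s hs
    rw [← hceq]
    rcases mem_pref_succ hs with hs' | rfl
    · exact hcB s hs'
    · exact hceq.le
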